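/- arXiv:1701.00510 — 4 statements merged into one kernel-verified Lean document; each statement's English description precedes it below -/
import Mathlib

section
/- Let A be a finite abelian group and a_1, ..., a_n elements of A. Then there exists a group homomorphism γ : A → {±1} with γ(a_i) = -1 for all i = 1, ..., n if and only if there is no relation in A of the form a_{i_1} a_{i_2} ⋯ a_{i_k} = x² with k odd (indices possibly repeated, x ∈ A). -/
/-- For a finite abelian group `A` and elements `a 1, ..., a n`, there exists a
group homomorphism `γ : A → {±1}` with `γ (a i) = -1` for all `i` if and only if there is no
relation `a (i₁) * ⋯ * a (i_m) = x ^ 2` with `m` odd (indices possibly repeated). -/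
theorem pm_one_hom_iff_no_odd_square_relation
    (A : Type*) [CommGroup A] [Finite A] (n : ℕ) (a : Fin n → A) :
    (∃ γ : A →* ℤˣ, ∀ i, γ (a i) = -1) ↔
      ¬ ∃ (m : ℕ) (i : Fin m → Fin n) (x : A),
          Odd m ∧ (∏ j, a (i j)) = x ^ 2 := by
  constructor
  · rintro ⟨γ, hγ⟩ ⟨m, i, x, hm, hrel⟩
    have h1 : γ (∏ j, a (i j)) = (-1 : ℤˣ) ^ m := by
      rw [map_prod]; simp [hγ]
    rw [hrel, map_pow, hm.neg_one_pow] at h1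
    have h2 : (γ x) ^ 2 = 1 := by
      rcases Int.units_eq_one_or (γ x) with h | h <;> simp [h]
    rw [h2] at h1
    exact absurd h1 (by decide)
  · intro H
    rcases isEmpty_or_nonempty (Fin n) with he | hne
    · exact ⟨1, fun i => (he.false i).elim⟩
    obtain ⟨i₀⟩ := hne
    set S : Subgroup A := Subgroup.closure
      ((Set.range fun y : A => y ^ 2) ∪
        (Set.range fun p : Fin n × Fin n => a p.1 * a p.2)) with hS
    have hsq : ∀ y : A, y ^ 2 ∈ S := fun y =>
      Subgroup.subset_closure (Or.inl ⟨y, rfl⟩)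
    have hpair : ∀ i j : Fin n, a i * a j ∈ S := fun i j =>
      Subgroup.subset_closure (Or.inr ⟨(i, j), rfl⟩)
    -- structure of elements of S
    have hstruct : ∀ s ∈ S, ∃ (m : ℕ) (i : Fin m → Fin n) (x : A),
        Even m ∧ s = x ^ 2 * ∏ j, a (i j) := by
      intro s hs
      induction hs using Subgroup.closure_induction with
      | mem z hz =>
        rcases hz with ⟨y, rfl⟩ | ⟨⟨i, j⟩, rfl⟩
        · exact ⟨0, Fin.elim0, y, Even.zero, by simp⟩
        · exact ⟨2, ![i, j], 1, even_two, by
            simp [Fin.prod_univ_succ]⟩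
      | one => exact ⟨0, Fin.elim0, 1, Even.zero, by simp⟩
      | mul z w _ _ hz hw =>
        obtain ⟨m₁, i₁, x₁, he₁, rfl⟩ := hz
        obtain ⟨m₂, i₂, x₂, he₂, rfl⟩ := hw
        refine ⟨m₁ + m₂, Fin.append i₁ i₂, x₁ * x₂, he₁.add he₂, ?_⟩
        rw [Fin.prod_univ_add]
        simp only [Fin.append_left, Fin.append_right, mul_pow]
        exact mul_mul_mul_comm _ _ _ _
      | inv z _ hz =>
        obtain ⟨m, i, x, he, rfl⟩ := hz
        refine ⟨m, i, x⁻¹ * (∏ j, a (i j))⁻¹, he, ?_⟩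
        calc (x ^ 2 * ∏ j, a (i j))⁻¹
            = (x ^ 2)⁻¹ * (∏ j, a (i j))⁻¹ := mul_inv _ _
          _ = x⁻¹ ^ 2 * (∏ j, a (i j))⁻¹ := by rw [inv_pow]
          _ = x⁻¹ ^ 2 * ((∏ j, a (i j))⁻¹ ^ 2 * ∏ j, a (i j)) := by
              have hP : (∏ j, a (i j))⁻¹ ^ 2 * ∏ j, a (i j) = (∏ j, a (i j))⁻¹ := by
                rw [pow_two, mul_assoc, inv_mul_cancel, mul_one]
              rw [hP]
          _ = (x⁻¹ * (∏ j, a (i j))⁻¹) ^ 2 * ∏ j, a (i j) := by rw [mul_pow, mul_assoc]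
    -- the quotient
    have hb0 : (QuotientGroup.mk (a i₀) : A ⧸ S) ≠ 1 := by
      intro h
      rw [QuotientGroup.eq_one_iff] at h
      obtain ⟨m, i, x, he, hx⟩ := hstruct _ h
      refine H ⟨m + 1, Fin.cons i₀ i, x * ∏ j, a (i j), he.add_one, ?_⟩
      rw [Fin.prod_univ_succ]
      simp only [Fin.cons_zero, Fin.cons_succ]
      rw [hx, mul_pow, mul_assoc, ← pow_two]
    have hmk : ∀ i : Fin n, (QuotientGroup.mk (a i) : A ⧸ S) = QuotientGroup.mk (a i₀) := by
      intro i
      rw [QuotientGroup.eq]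
      have : (a i)⁻¹ * a i₀ = ((a i) ^ 2)⁻¹ * (a i * a i₀) := by
        rw [pow_two, mul_inv, mul_assoc, ← mul_assoc (a i)⁻¹ (a i) (a i₀),
          inv_mul_cancel, one_mul]
      rw [this]
      exact mul_mem (inv_mem (hsq (a i))) (hpair i i₀)
    -- ZMod 2 module structure on the additivization of the quotient
    letI : Module (ZMod 2) (Additive (A ⧸ S)) := AddCommGroup.zmodModule (by
      intro x
      induction x using Additive.rec with
      | ofMul b =>
        induction b using QuotientGroup.induction_on with
        | H y =>
          show (2 : ℕ) • Additive.ofMul (QuotientGroup.mk y : A ⧸ S) = 0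
          rw [← ofMul_pow, ← QuotientGroup.mk_pow, (QuotientGroup.eq_one_iff _).2 (hsq y),
            ofMul_one])
    have hb0' : (Additive.ofMul (QuotientGroup.mk (a i₀) : A ⧸ S)) ≠ 0 := hb0
    obtain ⟨φ, hφ⟩ : ∃ φ : Module.Dual (ZMod 2) (Additive (A ⧸ S)),
        φ (Additive.ofMul (QuotientGroup.mk (a i₀) : A ⧸ S)) ≠ 0 := by
      by_contra hc
      push_neg at hc
      exact hb0' ((Module.forall_dual_apply_eq_zero_iff (ZMod 2) _).mp hc)
    -- build the character
    let g : ZMod 2 → ℤˣ := fun u => if u = 0 then 1 else -1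
    have hg : ∀ u v : ZMod 2, g (u + v) = g u * g v := by decide
    refine ⟨{ toFun := fun x => g (φ (Additive.ofMul (QuotientGroup.mk x : A ⧸ S)))
              map_one' := ?_
              map_mul' := ?_ }, ?_⟩
    · show g (φ (Additive.ofMul (1 : A ⧸ S))) = 1
      have : (Additive.ofMul (1 : A ⧸ S)) = 0 := rfl
      rw [this, map_zero]
      rfl
    · intro x y
      show g (φ (Additive.ofMul (QuotientGroup.mk (x * y) : A ⧸ S))) = _
      have : (Additive.ofMul (QuotientGroup.mk (x * y) : A ⧸ S)) =
          Additive.ofMul (QuotientGroup.mk x : A ⧸ S) +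
          Additive.ofMul (QuotientGroup.mk y : A ⧸ S) := rfl
      rw [this, map_add, hg]
    · intro i
      show g (φ (Additive.ofMul (QuotientGroup.mk (a i) : A ⧸ S))) = -1
      rw [hmk i]
      simp only [g, if_neg hφ]
end

section
/- Let Γ be a finite abelian group with a bicharacter r₀ : Γ × Γ → k^× and elements g_1, ..., g_n ∈ Γ with r₀(g_i, g_i) = -1 and r₀(g_i, g_j)r₀(g_j, g_i) = 1 for i ≠ j. Then there is no relation of the form g_{i_1} g_{i_2} ⋯ g_{i_k} = x² with k odd and x in the subgroup generated by g_1, ..., g_n. -/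
/-- With a bicharacter `r₀` on a finite abelian group `Γ` and elements `g i`
satisfying `r₀ (g i) (g i) = -1` and `r₀ (g i) (g j) * r₀ (g j) (g i) = 1` for `i ≠ j`,
there is no relation `g i₁ * ⋯ * g i_m = x ^ 2` with `m` odd and `x` in the subgroup
generated by the `g i`. -/
theorem no_odd_square_relation_of_bicharacter
    (k : Type*) [Field k] [CharZero k]
    (Γ : Type*) [CommGroup Γ] [Finite Γ]
    (r₀ : Γ → Γ → kˣ)
    (hmul₁ : ∀ x y z : Γ, r₀ (x * y) z = r₀ x z * r₀ y z)
    (hmul₂ : ∀ x y z : Γ, r₀ x (y * z) = r₀ x y * r₀ x z)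
    (n : ℕ) (g : Fin n → Γ)
    (hdiag : ∀ i, r₀ (g i) (g i) = -1)
    (hoff : ∀ i j, i ≠ j → r₀ (g i) (g j) * r₀ (g j) (g i) = 1) :
    ¬ ∃ (m : ℕ) (i : Fin m → Fin n) (x : Γ),
        Odd m ∧ x ∈ Subgroup.closure (Set.range g) ∧ (∏ j, g (i j)) = x ^ 2 := by
  rintro ⟨m, i, x, hm, hx, hrel⟩
  set β : Γ → Γ → kˣ := fun y z => r₀ y z * r₀ z y with hβ
  have hone₁ : ∀ z : Γ, r₀ 1 z = 1 := by
    intro z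
    have := hmul₁ 1 1 z
    simpa using (mul_left_cancel (a := r₀ 1 z) (by simpa using this.symm))
  have hone₂ : ∀ z : Γ, r₀ z 1 = 1 := by
    intro z
    have := hmul₂ z 1 1
    simpa using (mul_left_cancel (a := r₀ z 1) (by simpa using this.symm))
  have hβmul₁ : ∀ y y' z : Γ, β (y * y') z = β y z * β y' z := by
    intro y y' z
    simp only [hβ, hmul₁, hmul₂]
    exact Units.ext (by push_cast; ring)
  have hβmul₂ : ∀ y z z' : Γ, β y (z * z') = β y z * β y z' := by
    intro y z z'
    simp only [hβ, hmul₁, hmul₂]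
    exact Units.ext (by push_cast; ring)
  have hβone₁ : ∀ z : Γ, β 1 z = 1 := by
    intro z; simp [hβ, hone₁, hone₂]
  have hβone₂ : ∀ y : Γ, β y 1 = 1 := by
    intro y; simp [hβ, hone₁, hone₂]
  have hβinv₁ : ∀ y z : Γ, β y⁻¹ z = (β y z)⁻¹ := by
    intro y z
    have : β y z * β y⁻¹ z = 1 := by
      rw [← hβmul₁]; simp [hβone₁]
    exact eq_inv_of_mul_eq_one_left (by rw [mul_comm] at this; exact this)
  have hβinv₂ : ∀ y z : Γ, β y z⁻¹ = (β y z)⁻¹ := by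
    intro y z
    have : β y z * β y z⁻¹ = 1 := by
      rw [← hβmul₂]; simp [hβone₂]
    exact eq_inv_of_mul_eq_one_left (by rw [mul_comm] at this; exact this)
  -- β is trivial on pairs of generators
  have hβgen : ∀ a b : Fin n, β (g a) (g b) = 1 := by
    intro a b
    by_cases hab : a = b
    · subst hab
      simp [hβ, hdiag]
    · exact hoff a b hab
  set H := Subgroup.closure (Set.range g) with hH
  -- β is trivial when the second argument is in H and first is a generator
  have step1 : ∀ a : Fin n, ∀ z ∈ H, β (g a) z = 1 := by
    intro a z hz
    induction hz using Subgroup.closure_induction with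
    | mem w hw =>
      obtain ⟨b, rfl⟩ := hw
      exact hβgen a b
    | one => exact hβone₂ _
    | mul u v hu hv ihu ihv => rw [hβmul₂, ihu, ihv, one_mul]
    | inv u hu ihu => rw [hβinv₂, ihu, inv_one]
  have step2 : ∀ y ∈ H, ∀ z ∈ H, β y z = 1 := by
    intro y hy
    induction hy using Subgroup.closure_induction with
    | mem w hw =>
      obtain ⟨a, rfl⟩ := hw
      exact fun z hz => step1 a z hz
    | one => exact fun z _ => hβone₁ z
    | mul u v hu hv ihu ihv =>
      intro z hz
      rw [hβmul₁, ihu z hz, ihv z hz, one_mul]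
    | inv u hu ihu =>
      intro z hz
      rw [hβinv₁, ihu z hz, inv_one]
  -- the quadratic form is a homomorphism on H
  let φ : H →* kˣ :=
    { toFun := fun y => r₀ (y : Γ) (y : Γ)
      map_one' := by simpa using hone₁ 1
      map_mul' := by
        rintro ⟨a, ha⟩ ⟨b, hb⟩
        simp only [Subgroup.coe_mul, hmul₁, hmul₂]
        have h := step2 a ha b hb
        simp only [hβ] at h
        calc r₀ a a * r₀ a b * (r₀ b a * r₀ b b)
            = r₀ a a * r₀ b b * (r₀ a b * r₀ b a) := Units.ext (by push_cast; ring)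
          _ = r₀ a a * r₀ b b := by rw [h, mul_one] }
  have hmemg : ∀ a : Fin n, g a ∈ H := fun a =>
    Subgroup.subset_closure ⟨a, rfl⟩
  have hmemP : (∏ j, g (i j)) ∈ H := Subgroup.prod_mem _ fun j _ => hmemg (i j)
  have hP : φ ⟨∏ j, g (i j), hmemP⟩ = (-1) ^ m := by
    have : (⟨∏ j, g (i j), hmemP⟩ : H) = ∏ j, (⟨g (i j), hmemg (i j)⟩ : H) := by
      ext
      simp
    rw [this, map_prod]
    simp only [φ, MonoidHom.coe_mk, OneHom.coe_mk]
    simp [hdiag]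
  have hQ : φ ⟨∏ j, g (i j), hmemP⟩ = 1 := by
    have hx2 : (⟨∏ j, g (i j), hmemP⟩ : H) = (⟨x, hx⟩ : H) ^ 2 := by
      ext; simpa using hrel
    rw [hx2, map_pow]
    have := step2 x hx x hx
    simp only [hβ] at this
    simpa [φ, sq] using this
  rw [hQ, hm.neg_one_pow] at hP
  have h2 : ((1 : kˣ) : k) = ((-1 : kˣ) : k) := congrArg Units.val hP
  norm_num at h2
end

section
/- Let q ∈ k be a scalar with q² = 1 and q ≠ 1 (i.e., q = -1), let V be a 1-dimensional space with basis x, and let B(V) # k[Γ] be the algebra generated by a finite abelian group Γ and x with relations gx = χ(g)xg and x² = 0, where χ ∈ Γ̂ and g₀ ∈ Γ satisfy χ(g₀) = -1. Then the elements {g, gx : g ∈ Γ} are linearly independent, and with Δ(g) = g ⊗ g, Δ(x) = g₀ ⊗ x + x ⊗ 1, this algebra is a Hopf algebra of dimension 2|Γ|. -/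
set_option maxHeartbeats 1000000
set_option synthInstance.maxHeartbeats 400000

attribute [-instance] Finsupp.instMul Finsupp.instMulZeroClass Finsupp.instSemigroupWithZero
  Finsupp.instNonUnitalNonAssocSemiring Finsupp.instNonUnitalSemiring
  Finsupp.instNonUnitalCommSemiring Finsupp.instNonUnitalNonAssocRing
  Finsupp.instNonUnitalRing Finsupp.instNonUnitalCommRing

attribute [-simp] Finsupp.single_mul

attribute [-instance] Finsupp.instCoalgebra Finsupp.instCoalgebraStruct

attribute [-simp] Finsupp.comul_single Finsupp.counit_single

open TensorProduct Finsupp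

section Build
variable (k : Type) [Field k] (Γ : Type) [CommGroup Γ] (g₀ : Γ) (χ : Γ →* kˣ)

structure Idx (k : Type) [Field k] (Γ : Type) [CommGroup Γ] (g₀ : Γ) (χ : Γ →* kˣ) where
  g : Γ
  b : Bool

abbrev F := Idx k Γ g₀ χ →₀ k

noncomputable def mulB : Idx k Γ g₀ χ → Idx k Γ g₀ χ → F k Γ g₀ χ
  | ⟨g, b⟩, ⟨h, c⟩ =>
    if b && c then 0
    else Finsupp.single ⟨g * h, xor b c⟩ (if b then ((χ h)⁻¹ : kˣ) else 1)

noncomputable def mulMap : F k Γ g₀ χ →ₗ[k] F k Γ g₀ χ →ₗ[k] F k Γ g₀ χ :=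
  Finsupp.lsum k fun a => LinearMap.toSpanSingleton k _
    (Finsupp.lsum k fun b => LinearMap.toSpanSingleton k _ (mulB k Γ g₀ χ a b))

variable {k Γ g₀ χ}

lemma mulMap_single_single (a b : Idx k Γ g₀ χ) (c d : k) :
    mulMap k Γ g₀ χ (single a c) (single b d) = (c * d) • mulB k Γ g₀ χ a b := by
  simp [mulMap, LinearMap.toSpanSingleton_apply, smul_smul]

lemma assoc_single (a b e : Idx k Γ g₀ χ) :
    mulMap k Γ g₀ χ (mulMap k Γ g₀ χ (single a 1) (single b 1)) (single e 1)
      = mulMap k Γ g₀ χ (single a 1) (mulMap k Γ g₀ χ (single b 1) (single e 1)) := by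
  obtain ⟨g, bb⟩ := a; obtain ⟨h, c⟩ := b; obtain ⟨l, d⟩ := e
  rcases bb <;> rcases c <;> rcases d <;>
    simp [mulB, mulMap_single_single, mul_assoc, map_mul, mul_inv, mul_comm, mul_left_comm,
      smul_single, smul_smul]

lemma mulMap_assoc (f g h : F k Γ g₀ χ) :
    mulMap k Γ g₀ χ (mulMap k Γ g₀ χ f g) h
      = mulMap k Γ g₀ χ f (mulMap k Γ g₀ χ g h) := by
  induction h using Finsupp.induction_linear with
  | zero => simp
  | add h1 h2 i1 i2 => simp [i1, i2]
  | single e ce =>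
    induction g using Finsupp.induction_linear with
    | zero => simp
    | add g1 g2 i1 i2 => simp [i1, i2]
    | single b cb =>
      induction f using Finsupp.induction_linear with
      | zero => simp
      | add f1 f2 i1 i2 => simp [i1, i2, LinearMap.add_apply]
      | single a ca =>
        have h1 : (single a ca : F k Γ g₀ χ) = ca • single a 1 := by simp
        have h2 : (single b cb : F k Γ g₀ χ) = cb • single b 1 := by simp
        have h3 : (single e ce : F k Γ g₀ χ) = ce • single e 1 := by simp
        rw [h1, h2, h3]
        simp only [map_smul, LinearMap.smul_apply]
        rw [assoc_single]

variable (k Γ g₀ χ)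

noncomputable instance : Ring (F k Γ g₀ χ) :=
  { (inferInstance : AddCommGroup (F k Γ g₀ χ)) with
    mul := fun f g => mulMap k Γ g₀ χ f g
    one := Finsupp.single ⟨1, false⟩ 1
    left_distrib := fun a b c => map_add _ b c
    right_distrib := fun a b c => by
      show mulMap k Γ g₀ χ (a + b) c = _; rw [map_add]; rfl
    zero_mul := fun a => by show mulMap k Γ g₀ χ 0 a = 0; rw [map_zero]; rfl
    mul_zero := fun a => map_zero _
    mul_assoc := mulMap_assoc
    one_mul := fun f => by
      show mulMap k Γ g₀ χ (single ⟨1, false⟩ 1) f = f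
      induction f using Finsupp.induction_linear with
      | zero => simp
      | add f1 f2 i1 i2 => simp [i1, i2]
      | single a c => obtain ⟨g, b⟩ := a; simp [mulMap_single_single, mulB]
    mul_one := fun f => by
      show mulMap k Γ g₀ χ f (single ⟨1, false⟩ 1) = f
      induction f using Finsupp.induction_linear with
      | zero => simp
      | add f1 f2 i1 i2 => simp [i1, i2]
      | single a c =>
        obtain ⟨g, b⟩ := a
        rcases b <;> simp [mulMap_single_single, mulB] }

variable {k Γ g₀ χ}

lemma mul_def (f g : F k Γ g₀ χ) : f * g = mulMap k Γ g₀ χ f g := rfl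

lemma one_def : (1 : F k Γ g₀ χ) = single ⟨1, false⟩ 1 := rfl

lemma single_mul_single (a b : Idx k Γ g₀ χ) (c d : k) :
    (single a c * single b d : F k Γ g₀ χ) = (c * d) • mulB k Γ g₀ χ a b :=
  mulMap_single_single a b c d

noncomputable instance : Algebra k (F k Γ g₀ χ) :=
  Algebra.ofModule (fun r x y => by simp [mul_def, map_smul])
    (fun r x y => by simp [mul_def, map_smul])

variable (k Γ g₀ χ)

noncomputable def comulB : Idx k Γ g₀ χ → F k Γ g₀ χ ⊗[k] F k Γ g₀ χ
  | ⟨g, false⟩ => single (⟨g, false⟩ : Idx k Γ g₀ χ) (1:k) ⊗ₜ[k] single ⟨g, false⟩ 1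
  | ⟨g, true⟩ => single (⟨g * g₀, false⟩ : Idx k Γ g₀ χ) (1:k) ⊗ₜ[k] single ⟨g, true⟩ 1
      + single (⟨g, true⟩ : Idx k Γ g₀ χ) (1:k) ⊗ₜ[k] single ⟨g, false⟩ 1

noncomputable def comulF : F k Γ g₀ χ →ₗ[k] F k Γ g₀ χ ⊗[k] F k Γ g₀ χ :=
  Finsupp.lsum k fun a => LinearMap.toSpanSingleton k _ (comulB k Γ g₀ χ a)

noncomputable def counitF : F k Γ g₀ χ →ₗ[k] k :=
  Finsupp.lsum k fun a => LinearMap.toSpanSingleton k k (if a.b then 0 else 1)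

variable {k Γ g₀ χ}

lemma comulF_single (a : Idx k Γ g₀ χ) (c : k) :
    comulF k Γ g₀ χ (single a c) = c • comulB k Γ g₀ χ a := by
  simp [comulF, LinearMap.toSpanSingleton_apply]

lemma counitF_single (a : Idx k Γ g₀ χ) (c : k) :
    counitF k Γ g₀ χ (single a c) = c * (if a.b then 0 else 1) := by
  simp [counitF, LinearMap.toSpanSingleton_apply, smul_eq_mul]

lemma coassocF :
    TensorProduct.assoc k (F k Γ g₀ χ) (F k Γ g₀ χ) (F k Γ g₀ χ) ∘ₗ
      (comulF k Γ g₀ χ).rTensor _ ∘ₗ comulF k Γ g₀ χ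
      = (comulF k Γ g₀ χ).lTensor _ ∘ₗ comulF k Γ g₀ χ := by
  refine Finsupp.lhom_ext fun a c => ?_
  obtain ⟨g, b⟩ := a
  rcases b <;>
    simp [comulF_single, comulB, tmul_add, add_tmul, mul_assoc, LinearMap.rTensor_tmul,
      LinearMap.lTensor_tmul] <;> abel

lemma rTensorF :
    (counitF k Γ g₀ χ).rTensor _ ∘ₗ comulF k Γ g₀ χ
      = TensorProduct.mk k k (F k Γ g₀ χ) 1 := by
  refine Finsupp.lhom_ext fun a c => ?_
  obtain ⟨g, b⟩ := a
  have hc : ∀ y : F k Γ g₀ χ, (c : k) ⊗ₜ[k] y = (1:k) ⊗ₜ[k] (c • y) := fun y => by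
    rw [← TensorProduct.smul_tmul, smul_eq_mul, mul_one]
  rcases b <;>
    simp [comulF_single, counitF_single, comulB, TensorProduct.smul_tmul', hc,
      LinearMap.rTensor_tmul]

lemma lTensorF :
    (counitF k Γ g₀ χ).lTensor _ ∘ₗ comulF k Γ g₀ χ
      = (TensorProduct.mk k (F k Γ g₀ χ) k).flip 1 := by
  refine Finsupp.lhom_ext fun a c => ?_
  obtain ⟨g, b⟩ := a
  have hc : ∀ y : F k Γ g₀ χ, y ⊗ₜ[k] (c : k) = (c • y) ⊗ₜ[k] (1:k) := fun y => by
    symm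
    rw [← TensorProduct.smul_tmul', ← TensorProduct.tmul_smul, smul_eq_mul, mul_one]
  rcases b <;>
    simp [comulF_single, counitF_single, comulB, hc, tmul_smul, TensorProduct.smul_tmul', LinearMap.lTensor_tmul]

noncomputable instance : Coalgebra k (F k Γ g₀ χ) where
  comul := comulF k Γ g₀ χ
  counit := counitF k Γ g₀ χ
  coassoc := coassocF
  rTensor_counit_comp_comul := rTensorF
  lTensor_counit_comp_comul := lTensorF

lemma counitF_mul (f g : F k Γ g₀ χ) :
    counitF k Γ g₀ χ (f * g) = counitF k Γ g₀ χ f * counitF k Γ g₀ χ g := by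
  induction f using Finsupp.induction_linear with
  | zero => simp
  | add f1 f2 i1 i2 => simp [add_mul, i1, i2]
  | single a c =>
    induction g using Finsupp.induction_linear with
    | zero => simp
    | add g1 g2 i1 i2 => simp [mul_add, i1, i2]
    | single b d =>
      obtain ⟨g, bb⟩ := a; obtain ⟨h, cc⟩ := b
      rcases bb <;> rcases cc <;>
        simp [single_mul_single, mulB, counitF_single, map_smul, smul_eq_mul] <;> ring

lemma single_tmul_single (p q : Idx k Γ g₀ χ) (a b : k) :
    (single p a : F k Γ g₀ χ) ⊗ₜ[k] (single q b : F k Γ g₀ χ)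
      = (a * b) • ((single p 1 : F k Γ g₀ χ) ⊗ₜ[k] (single q 1 : F k Γ g₀ χ)) := by
  rw [show (single p a : F k Γ g₀ χ) = a • single p 1 by simp,
    show (single q b : F k Γ g₀ χ) = b • single q 1 by simp]
  simp only [tmul_smul, ← TensorProduct.smul_tmul', smul_smul]
  rw [mul_comm]

lemma comulF_mul (hχ : (χ g₀ : k) = -1) (f g : F k Γ g₀ χ) :
    comulF k Γ g₀ χ (f * g) = comulF k Γ g₀ χ f * comulF k Γ g₀ χ g := by
  induction f using Finsupp.induction_linear with
  | zero => simp
  | add f1 f2 i1 i2 => simp [add_mul, i1, i2]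
  | single a c =>
    induction g using Finsupp.induction_linear with
    | zero => simp
    | add g1 g2 i1 i2 => simp [mul_add, i1, i2]
    | single b d =>
      obtain ⟨g, bb⟩ := a; obtain ⟨h, cc⟩ := b
      have inv1 : ((χ g₀)⁻¹ : kˣ) = ((-1 : kˣ) : kˣ)⁻¹ := by
        congr 1; ext; exact hχ
      have h0 : ((χ g₀ : kˣ) : k)⁻¹ = -1 := by rw [hχ]; norm_num
      rcases bb <;> rcases cc <;>
        simp [single_mul_single, mulB, comulF_single, comulB, map_smul, smul_smul,
          smul_mul_assoc, mul_smul_comm, Algebra.TensorProduct.tmul_mul_tmul,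
          add_mul, mul_add, smul_add,
          TensorProduct.smul_tmul', tmul_smul, mul_comm, mul_left_comm, map_mul, mul_inv]
      · rw [single_tmul_single _ _ (c * d) ((((χ h : kˣ)) : k))⁻¹]
        simp [TensorProduct.smul_tmul']
      · rw [single_tmul_single _ _ (c * d) ((((χ h : kˣ)) : k))⁻¹]
        simp only [h0, TensorProduct.smul_tmul', smul_single, smul_eq_mul, mul_one]
        rw [← TensorProduct.add_tmul, ← Finsupp.single_add,
          show c * d * (-1 * (((χ h : kˣ) : k))⁻¹) + c * d * (((χ h : kˣ) : k))⁻¹ = 0 by ring]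
        simp

lemma comul_def : (Coalgebra.comul : F k Γ g₀ χ →ₗ[k] F k Γ g₀ χ ⊗[k] F k Γ g₀ χ)
    = comulF k Γ g₀ χ := rfl

lemma counit_def : (Coalgebra.counit : F k Γ g₀ χ →ₗ[k] k) = counitF k Γ g₀ χ := rfl

noncomputable instance [Fact ((χ g₀ : k) = -1)] : Bialgebra k (F k Γ g₀ χ) :=
  Bialgebra.mk' k (F k Γ g₀ χ)
    (by rw [show (1 : F k Γ g₀ χ) = single ⟨1, false⟩ 1 from rfl, _root_.counit_def, counitF_single]; simp)
    (fun {a b} => counitF_mul a b)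
    (by
      rw [show (1 : F k Γ g₀ χ) = single ⟨1, false⟩ 1 from rfl, _root_.comul_def, comulF_single]
      simp [comulB, Algebra.TensorProduct.one_def]
      rfl)
    (fun {a b} => comulF_mul Fact.out a b)

variable (k Γ g₀ χ)

noncomputable def antipodeB : Idx k Γ g₀ χ → F k Γ g₀ χ
  | ⟨g, false⟩ => single ⟨g⁻¹, false⟩ 1
  | ⟨g, true⟩ => -(((χ g : kˣ) : k) • single ⟨(g * g₀)⁻¹, true⟩ 1)

noncomputable def antipodeF : F k Γ g₀ χ →ₗ[k] F k Γ g₀ χ :=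
  Finsupp.lsum k fun a => LinearMap.toSpanSingleton k _ (antipodeB k Γ g₀ χ a)

variable {k Γ g₀ χ}

lemma antipodeF_single (a : Idx k Γ g₀ χ) (c : k) :
    antipodeF k Γ g₀ χ (single a c) = c • antipodeB k Γ g₀ χ a := by
  simp [antipodeF, LinearMap.toSpanSingleton_apply]

noncomputable instance [Fact ((χ g₀ : k) = -1)] : HopfAlgebra k (F k Γ g₀ χ) where
  antipode := antipodeF k Γ g₀ χ
  mul_antipode_rTensor_comul := by
    refine Finsupp.lhom_ext fun a c => ?_
    obtain ⟨g, b⟩ := a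
    rcases b <;>
      simp [_root_.comul_def, _root_.counit_def, comulF_single, counitF_single, antipodeF_single, antipodeB, comulB,
        LinearMap.rTensor_tmul, LinearMap.mul'_apply, tmul_add, add_tmul,
        single_mul_single, mulB, smul_smul, Algebra.algebraMap_eq_smul_one,
        TensorProduct.smul_tmul', smul_single, neg_mul, mul_neg,
        Units.val_inv_eq_inv_val, smul_mul_assoc, neg_smul, one_def, mul_assoc, mul_inv_cancel_left]
  mul_antipode_lTensor_comul := by
    refine Finsupp.lhom_ext fun a c => ?_
    obtain ⟨g, b⟩ := a
    rcases b <;>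
      simp [_root_.comul_def, _root_.counit_def, comulF_single, counitF_single, antipodeF_single, antipodeB, comulB,
        LinearMap.lTensor_tmul, LinearMap.mul'_apply, tmul_add, add_tmul,
        single_mul_single, mulB, smul_smul, Algebra.algebraMap_eq_smul_one,
        tmul_smul, smul_single, neg_mul, mul_neg, map_inv, inv_inv,
        Units.val_inv_eq_inv_val, mul_smul_comm, smul_mul_assoc, neg_smul, one_def, mul_assoc, mul_inv_cancel_left]

variable (k Γ g₀ χ) [Fintype Γ]

noncomputable def idxEquiv : (Γ × Bool) ≃ Idx k Γ g₀ χ where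
  toFun p := ⟨p.1, p.2⟩
  invFun a := (a.g, a.b)
  left_inv p := rfl
  right_inv a := rfl

noncomputable instance : Fintype (Idx k Γ g₀ χ) :=
  Fintype.ofEquiv (Γ × Bool) (idxEquiv k Γ g₀ χ)

noncomputable def GF : Γ →* F k Γ g₀ χ where
  toFun g := single ⟨g, false⟩ 1
  map_one' := rfl
  map_mul' g h := by simp [single_mul_single, mulB]

end Build

open TensorProduct

/-- The bosonization `B(V) # k[Γ]` of a 1-dimensional quantum linear space of symmetric
type: a Hopf algebra containing the group `Γ` as group-likes and a `(g₀,1)`-skew-primitive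
element `x` with `g x = χ(g) x g` and `x² = 0`, such that the elements `{g, g·x : g ∈ Γ}`
are linearly independent and the dimension is `2·|Γ|`. -/
structure PointedRankOneHopf (k : Type) [Field k]
    (Γ : Type) [CommGroup Γ] [Fintype Γ] (g₀ : Γ) (χ : Γ →* kˣ) where
  H : Type
  [ringH : Ring H]
  [hopfH : HopfAlgebra k H]
  G : Γ →* H
  x : H
  comul_G : ∀ g : Γ, Coalgebra.comul (R := k) (G g) = G g ⊗ₜ[k] G g
  counit_G : ∀ g : Γ, Coalgebra.counit (R := k) (G g) = 1
  comul_x : Coalgebra.comul (R := k) x = G g₀ ⊗ₜ[k] x + x ⊗ₜ[k] (1 : H)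
  comm_rel : ∀ g : Γ, G g * x = (χ g : k) • (x * G g)
  x_sq : x ^ 2 = 0
  lin_indep : LinearIndependent k (fun p : Γ × Bool => if p.2 then G p.1 * x else G p.1)
  dim_eq : Module.finrank k H = 2 * Fintype.card Γ

/-- Given a finite abelian group `Γ`, a character `χ ∈ Γ̂` and `g₀ ∈ Γ` with
`χ(g₀) = -1` (i.e. `q = χ(g₀)` satisfies `q² = 1`, `q ≠ 1`), the algebra generated by `Γ`
and `x` with relations `g x = χ(g) x g`, `x² = 0` and comultiplication `Δ(g) = g ⊗ g`,
`Δ(x) = g₀ ⊗ x + x ⊗ 1` is a Hopf algebra of dimension `2|Γ|` in which the elements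
`{g, g·x : g ∈ Γ}` are linearly independent. -/
theorem exists_pointed_rank_one_hopf
    (k : Type) [Field k] [IsAlgClosed k] [CharZero k]
    (Γ : Type) [CommGroup Γ] [Fintype Γ]
    (g₀ : Γ) (χ : Γ →* kˣ) (q : kˣ)
    (hq : q = χ g₀) (hq2 : q ^ 2 = 1) (hq1 : q ≠ 1) :
    Nonempty (PointedRankOneHopf k Γ g₀ χ) := by
  have hχ : ((χ g₀ : kˣ) : k) = -1 := by
    rw [← hq]
    have h2 : ((q : k)) ^ 2 = 1 := by
      have := congrArg (Units.val) hq2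
      push_cast at this
      exact_mod_cast this
    have h1 : (q : k) ≠ 1 := fun h => hq1 (Units.ext h)
    have h3 : ((q : k) - 1) * ((q : k) + 1) = 0 := by ring_nf; linear_combination h2
    rcases mul_eq_zero.mp h3 with h | h
    · exact absurd (sub_eq_zero.mp h) h1
    · exact eq_neg_of_add_eq_zero_left h
  haveI : Fact (((χ g₀ : kˣ) : k) = -1) := ⟨hχ⟩
  refine ⟨{
    H := F k Γ g₀ χ
    G := GF k Γ g₀ χ
    x := Finsupp.single ⟨1, true⟩ 1
    comul_G := fun g => by simp [GF, _root_.comul_def, comulF_single, comulB]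
    counit_G := fun g => by simp [GF, _root_.counit_def, counitF_single]
    comul_x := by simp [GF, _root_.comul_def, comulF_single, comulB, one_def]
    comm_rel := fun g => by
      simp [GF, single_mul_single, mulB, smul_smul, Units.val_inv_eq_inv_val,
        Finsupp.smul_single]
    x_sq := by rw [pow_two, single_mul_single]; simp [mulB]
    lin_indep := by
      have li := (Finsupp.basisSingleOne (R := k) (ι := Idx k Γ g₀ χ)).linearIndependent
      have hinj : Function.Injective (fun p : Γ × Bool => (⟨p.1, p.2⟩ : Idx k Γ g₀ χ)) := by
        intro a b hab
        exact Prod.ext (congrArg Idx.g hab) (congrArg Idx.b hab)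
      have key := li.comp _ hinj
      have : (fun p : Γ × Bool =>
          if p.2 then GF k Γ g₀ χ p.1 * Finsupp.single ⟨1, true⟩ 1 else GF k Γ g₀ χ p.1)
          = fun p : Γ × Bool =>
            Finsupp.single (⟨p.1, p.2⟩ : Idx k Γ g₀ χ) (1 : k) := by
        funext p
        rcases p with ⟨g, b⟩
        cases b <;> simp [GF, single_mul_single, mulB]
      rw [this]
      exact key
    dim_eq := by
      rw [Module.finrank_finsupp_self, Fintype.card_congr (idxEquiv k Γ g₀ χ).symm]
      simp [Fintype.card_prod, mul_comm] }⟩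
end

section
/- In the Nichols/quantum-linear-space Hopf algebra H = B(V) # k[Γ] with skew-primitives x_1, ..., x_n satisfying x_i² = 0 and x_i x_j = χ_j(g_i) x_j x_i, for a subset P = {i_1 < ⋯ < i_s} ⊆ {1,...,n} write x_P = x_{i_1}⋯x_{i_s}. Then the comultiplication satisfies Δ(x_P) = Σ_{F ⊆ P} ψ(P,F) g_F x_{P∖F} ⊗ x_F, where g_F = Π_{i∈F} g_i and ψ(P,F) = Π_{j∈F, i∈P∖F, i<j} χ_j(g_i). -/
open TensorProduct

/-- In the quantum linear space Hopf algebra `B(V) # k[Γ]` with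
skew-primitives `x i` satisfying `x i ^ 2 = 0` and `x i * x j = χ j (g i) • (x j * x i)`,
the ordered products `x_P` (over subsets `P`, in increasing order) satisfy
`Δ(x_P) = ∑_{F ⊆ P} ψ(P,F) • (g_F x_{P∖F}) ⊗ x_F`, where `g_F = ∏_{i ∈ F} g i` and
`ψ(P,F) = ∏_{j ∈ F} ∏_{i ∈ P∖F, i < j} χ j (g i)`. -/
theorem comul_ordered_monomial
    (k : Type) [Field k] [IsAlgClosed k] [CharZero k]
    (Γ : Type) [CommGroup Γ] [Fintype Γ]
    (H : Type) [Ring H] [HopfAlgebra k H]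
    (n : ℕ) (g : Fin n → Γ) (χ : Fin n → (Γ →* kˣ))
    (hdiag : ∀ i, χ i (g i) = -1)
    (hoff : ∀ i j, i ≠ j → χ i (g j) * χ j (g i) = 1)
    (G : Γ →* H) (x : Fin n → H)
    (comul_G : ∀ γ : Γ, Coalgebra.comul (R := k) (G γ) = G γ ⊗ₜ[k] G γ)
    (comul_x : ∀ i, Coalgebra.comul (R := k) (x i) =
      G (g i) ⊗ₜ[k] x i + x i ⊗ₜ[k] (1 : H))
    (comm_rel : ∀ (γ : Γ) (i), G γ * x i = (χ i γ : k) • (x i * G γ))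
    (x_sq : ∀ i, x i ^ 2 = 0)
    (braid_rel : ∀ i j, x i * x j = ((χ j) (g i) : k) • (x j * x i)) :
    ∀ P : Finset (Fin n),
      Coalgebra.comul (R := k) ((P.sort (· ≤ ·)).map x).prod =
        ∑ F ∈ P.powerset,
          (∏ j ∈ F, ∏ i ∈ (P \ F).filter (· < j), ((χ j) (g i) : k)) •
            ((G (∏ i ∈ F, g i) * (((P \ F).sort (· ≤ ·)).map x).prod)
              ⊗ₜ[k] ((F.sort (· ≤ ·)).map x).prod) := by
  intro P
  induction P using Finset.induction_on_min with
  | empty => simp [Algebra.TensorProduct.one_def]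
  | insert a s ha ih =>
      have hanot : a ∉ s := fun h => lt_irrefl a (ha a h)
      have hle : ∀ b ∈ s, a ≤ b := fun b hb => (ha b hb).le
      rw [Finset.sort_insert _ hle hanot, List.map_cons, List.prod_cons,
        Bialgebra.comul_mul, comul_x a, ih, add_mul, Finset.mul_sum, Finset.mul_sum]
      -- RHS
      have hdisj : Disjoint s.powerset (s.powerset.image (insert a)) := by
        rw [Finset.disjoint_left]
        intro F hF hF2
        obtain ⟨F', hF', rfl⟩ := Finset.mem_image.1 hF2
        exact hanot (Finset.mem_powerset.1 hF (Finset.mem_insert_self a F'))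
      have hinj : ∀ F ∈ s.powerset, ∀ F' ∈ s.powerset, insert a F = insert a F' → F = F' := by
        intro F hF F' hF' h
        have haF : a ∉ F := fun hm => hanot (Finset.mem_powerset.1 hF hm)
        have haF' : a ∉ F' := fun hm => hanot (Finset.mem_powerset.1 hF' hm)
        rw [← Finset.erase_insert haF, ← Finset.erase_insert haF', h]
      rw [Finset.powerset_insert, Finset.sum_union hdisj, Finset.sum_image hinj, add_comm]
      refine congrArg₂ (· + ·) (Finset.sum_congr rfl ?_) (Finset.sum_congr rfl ?_)
      · -- x a ⊗ 1 terms  ↔  F ⊆ s (a ∉ F)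
        intro F hF
        have hFs : F ⊆ s := Finset.mem_powerset.1 hF
        have haF : a ∉ F := fun h => hanot (hFs h)
        have haSF : a ∉ s \ F := fun h => hanot (Finset.mem_sdiff.1 h).1
        rw [Finset.insert_sdiff_of_notMem _ haF,
          Finset.sort_insert _ (fun b hb => hle b (Finset.mem_sdiff.1 hb).1) haSF,
          List.map_cons, List.prod_cons]
        have hψ : (∏ j ∈ F, ∏ i ∈ Finset.filter (fun x => x < j) (insert a (s \ F)), (((χ j) (g i) : kˣ) : k))
            = (∏ j ∈ F, (((χ j) (g a) : kˣ) : k)) *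
              ∏ j ∈ F, ∏ i ∈ Finset.filter (fun x => x < j) (s \ F), (((χ j) (g i) : kˣ) : k) := by
          rw [← Finset.prod_mul_distrib]
          refine Finset.prod_congr rfl fun j hj => ?_
          rw [Finset.filter_insert, if_pos (ha j (hFs hj)),
            Finset.prod_insert (fun h => haSF (Finset.mem_filter.1 h).1)]
        have h1 : ((((χ a) (∏ i ∈ F, g i)) : kˣ) : k) * ∏ j ∈ F, (((χ j) (g a) : kˣ) : k) = 1 := by
          rw [map_prod]
          push_cast
          rw [← Finset.prod_mul_distrib]
          refine Finset.prod_eq_one fun j hj => ?_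
          have hne : a ≠ j := fun h => hanot (h ▸ hFs hj)
          rw [← Units.val_mul, hoff a j hne, Units.val_one]
        have hxa : x a * G (∏ i ∈ F, g i) =
            (∏ j ∈ F, (((χ j) (g a) : kˣ) : k)) • (G (∏ i ∈ F, g i) * x a) := by
          calc x a * G (∏ i ∈ F, g i)
              = (((((χ a) (∏ i ∈ F, g i)) : kˣ) : k) * ∏ j ∈ F, (((χ j) (g a) : kˣ) : k)) •
                (x a * G (∏ i ∈ F, g i)) := by rw [h1, one_smul]
            _ = (∏ j ∈ F, (((χ j) (g a) : kˣ) : k)) •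
                (((((χ a) (∏ i ∈ F, g i)) : kˣ) : k) • (x a * G (∏ i ∈ F, g i))) := by
                rw [mul_comm, mul_smul]
            _ = _ := by rw [← comm_rel]
        rw [hψ, mul_smul_comm, Algebra.TensorProduct.tmul_mul_tmul, one_mul,
          ← mul_assoc, hxa, smul_mul_assoc, TensorProduct.smul_tmul', smul_smul,
          mul_comm ((∏ j ∈ F, ∏ i ∈ Finset.filter (fun x => x < j) (s \ F), (((χ j) (g i) : kˣ) : k))), mul_assoc]
        exact (TensorProduct.smul_tmul' _ _ _).symm
      · -- G(g a) ⊗ x a terms ↔ insert a F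
        intro F hF
        have hFs : F ⊆ s := Finset.mem_powerset.1 hF
        have haF : a ∉ F := fun h => hanot (hFs h)
        have hsd : insert a s \ insert a F = s \ F := by
          ext i
          simp only [Finset.mem_sdiff, Finset.mem_insert, not_or]
          constructor
          · rintro ⟨h1 | h1, h2, h3⟩
            · exact absurd h1 h2
            · exact ⟨h1, h3⟩
          · rintro ⟨h1, h2⟩
            exact ⟨Or.inr h1, fun h => hanot (h ▸ h1), h2⟩
        have hfe : Finset.filter (fun x => x < a) (s \ F) = ∅ :=
          Finset.filter_false_of_mem fun i hi =>
            not_lt.2 (hle i (Finset.mem_sdiff.1 hi).1)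
        have hψ2 : (∏ j ∈ insert a F, ∏ i ∈ Finset.filter (fun x => x < j) (s \ F), (((χ j) (g i) : kˣ) : k))
            = ∏ j ∈ F, ∏ i ∈ Finset.filter (fun x => x < j) (s \ F), (((χ j) (g i) : kˣ) : k) := by
          rw [Finset.prod_insert haF, hfe, Finset.prod_empty, one_mul]
        rw [hsd, hψ2, Finset.prod_insert haF, map_mul,
          Finset.sort_insert _ (fun b hb => hle b (hFs hb)) haF, List.map_cons,
          List.prod_cons, mul_smul_comm, Algebra.TensorProduct.tmul_mul_tmul, mul_assoc]
end
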